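/- If a strongly regular graph with parameters (n, k, 1, 2) exists with k ≥ 2, then n = (k²+2)/2 and the number of 5-cycles nk(k-2)(k-4)/5 is a nonnegative integer; in particular 5 divides nk(k-2)(k-4). -/
import Mathlib

private lemma zmod5_key : ∀ a m : ZMod 5, 2 * m = a ^ 2 + 2 →
    m * (-3 * a + 4 + 4 * (a - 1) * m) = 0 → m * a * (a - 2) * (a - 4) = 0 := by decide

/-- If an `srg(n,k,1,2)` with `k ≥ 2` exists, then `n = (k²+2)/2` and
`5 ∣ nk(k-2)(k-4)` (so the pentagon count `nk(k-2)(k-4)/5` is a nonnegative integer). -/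
theorem srg_pentagon_divisibility {V : Type*} [Fintype V] (G : SimpleGraph V)
    [DecidableRel G.Adj] {n k : ℕ} (h : G.IsSRGWith n k 1 2) (hk : 2 ≤ k) (hn : 0 < n) :
    2 * n = k ^ 2 + 2 ∧ 5 ∣ n * k * (k - 2) * (k - 4) := by
  classical
  -- Part 1 : 2n = k² + 2
  have hkn : k < n := by
    have hV : 0 < Fintype.card V := h.card ▸ hn
    obtain ⟨v⟩ := Fintype.card_pos_iff.mp hV
    have hd := G.degree_lt_card_verts v
    rwa [h.regular v, h.card] at hd
  have hpar := SimpleGraph.IsSRGWith.param_eq G h hn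
  have h2n : 2 * n = k ^ 2 + 2 := by
    obtain ⟨j, rfl⟩ : ∃ j, k = j + 2 := ⟨k - 2, by omega⟩
    obtain ⟨m, rfl⟩ : ∃ m, n = m + (j + 3) := ⟨n - (j + 3), by omega⟩
    have e1 : j + 2 - 1 - 1 = j := by omega
    have e2 : m + (j + 3) - (j + 2) - 1 = m := by omega
    rw [e1, e2] at hpar
    nlinarith [hpar]
  refine ⟨h2n, ?_⟩
  -- Part 2 : divisibility by 5 via trace of A^5 over ZMod 5
  haveI : Fact (Nat.Prime 5) := ⟨by norm_num⟩
  set A : Matrix V V (ZMod 5) := G.adjMatrix (ZMod 5) with hA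
  set J : Matrix V V (ZMod 5) := Matrix.of fun _ _ => (1 : ZMod 5) with hJ
  have hAJ : A * J = (k : ZMod 5) • J := by
    ext v w
    simp [hA, hJ, h.regular v]
  have hJA : J * A = (k : ZMod 5) • J := by
    ext v w
    simp [hA, hJ, h.regular w]
  have hJJ : J * J = (n : ZMod 5) • J := by
    ext v w
    simp [hJ, Matrix.mul_apply, ← h.card]
  have hC : Gᶜ.adjMatrix (ZMod 5) = J - 1 - A := by
    ext v w
    rcases eq_or_ne v w with rfl | hvw
    · simp [hJ, hA]
    · by_cases hadj : G.Adj v w <;>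
        simp [hJ, hA, hadj, hvw, Matrix.one_apply, SimpleGraph.compl_adj]
  have hTrA : Matrix.trace A = 0 := by rw [hA]; simp
  have hTrJ : Matrix.trace J = (n : ZMod 5) := by
    simp [hJ, Matrix.trace, Matrix.diag, ← h.card]
  have hTr1 : Matrix.trace (1 : Matrix V V (ZMod 5)) = (n : ZMod 5) := by
    rw [Matrix.trace_one, ← h.card]
  have hA2 : A ^ 2 = ((k : ZMod 5) - 2) • (1 : Matrix V V (ZMod 5)) - A + (2 : ZMod 5) • J := by
    have hm := h.matrix_eq (α := ZMod 5)
    rw [hC] at hm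
    rw [← hA] at hm
    rw [hm]
    simp only [← Nat.cast_smul_eq_nsmul (ZMod 5), one_smul]
    ext i j
    simp only [Matrix.smul_apply, Matrix.add_apply, Matrix.sub_apply, smul_eq_mul]
    ring
  have hA3 : A ^ 3 = ((k : ZMod 5) - 1) • A - ((k : ZMod 5) - 2) • (1 : Matrix V V (ZMod 5))
      + (2 * (k : ZMod 5) - 2) • J := by
    have e : A ^ 3 = A ^ 2 * A := by rw [← pow_succ]
    rw [e, hA2]
    simp only [add_mul, sub_mul, smul_mul_assoc, one_mul]
    rw [show A * A = A ^ 2 from (pow_two A).symm, hA2, hJA]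
    ext i j
    simp [Matrix.smul_apply, Matrix.add_apply, Matrix.sub_apply]
    ring
  have hA5 : A ^ 5 = (-(2 * ((k : ZMod 5) - 2) ^ 2 + ((k : ZMod 5) - 2))) • (1 : Matrix V V (ZMod 5))
      + (((k : ZMod 5) - 2) ^ 2 + 3 * ((k : ZMod 5) - 2) + 1) • A
      + (2 * (k : ZMod 5) ^ 2 - 10 * (k : ZMod 5) + 10
        + 4 * ((k : ZMod 5) - 1) * (n : ZMod 5)) • J := by
    have hAA : A * A = ((k : ZMod 5) - 2) • (1 : Matrix V V (ZMod 5)) - A + (2 : ZMod 5) • J := by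
      rw [← pow_two, hA2]
    have e : A ^ 5 = A ^ 3 * A ^ 2 := by rw [← pow_add]
    rw [e, hA3, hA2]
    simp only [add_mul, mul_add, sub_mul, mul_sub, smul_mul_assoc, mul_smul_comm,
      one_mul, mul_one, smul_smul, hAA, hAJ, hJA, hJJ]
    ext i j
    simp only [Matrix.smul_apply, Matrix.add_apply, Matrix.sub_apply, Matrix.neg_apply,
      smul_eq_mul]
    ring
  have hT : Matrix.trace (A ^ 5)
      = (n : ZMod 5) * (-3 * (k : ZMod 5) + 4 + 4 * ((k : ZMod 5) - 1) * (n : ZMod 5)) := by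
    rw [hA5]
    simp only [Matrix.trace_add, Matrix.trace_sub, Matrix.trace_smul, hTrJ, hTr1, hTrA,
      smul_eq_mul]
    ring
  have hzero : (n : ZMod 5) * (-3 * (k : ZMod 5) + 4 + 4 * ((k : ZMod 5) - 1) * (n : ZMod 5))
      = 0 := by
    rw [← hT, ZMod.trace_pow_card, hTrA]
    norm_num
  have hcast : (2 : ZMod 5) * (n : ZMod 5) = (k : ZMod 5) ^ 2 + 2 := by
    have := congrArg (Nat.cast : ℕ → ZMod 5) h2n
    push_cast at this
    linear_combination this
  rcases le_or_gt k 4 with hk4 | hk4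
  · have h4 : k - 4 = 0 := by omega
    simp [h4]
  · rw [← ZMod.natCast_eq_zero_iff]
    push_cast [Nat.cast_sub (by omega : 2 ≤ k), Nat.cast_sub (by omega : 4 ≤ k)]
    exact zmod5_key _ _ hcast hzero
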